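/- Let B be a C*-algebra, σ a *-automorphism of B, and D a closed *-subalgebra of B such that: d·σᵏ(e) ∈ σᵏ(D) for all d, e ∈ D and all integers k ≥ 1; D ∩ σ(D) = {0}; and either (β) for all d, e ∈ D, if (d + σ(e))·σ(f) = 0 and σ(f)·(d + σ(e)) = 0 for every f ∈ D then d + σ(e) = 0, or the set of products {d·σ(e) : d, e ∈ D} equals σ(D). Then for all integers m ≤ n and all elements d_j ∈ σ^{j-1}(D) (m ≤ j ≤ n) with d_m + d_{m+1} + ⋯ + d_n = 0, one has d_j = 0 for every j with m ≤ j ≤ n. -/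

import Mathlib

/-- The integer power `σᵏ` (`k ∈ ℤ`) of a *-automorphism, as a function. -/
noncomputable def starAutZPow {B : Type*} [Add B] [Mul B] [SMul ℂ B] [Star B]
    (σ : B ≃⋆ₐ[ℂ] B) (k : ℤ) : B → B :=
  ⇑(σ.toRingEquiv.toEquiv ^ k)

section Helpers

variable {B : Type*} [NonUnitalNormedRing B] [StarRing B] [CStarRing B]
    [NormedSpace ℂ B] [IsScalarTower ℂ B B] [SMulCommClass ℂ B B] [StarModule ℂ B]
    (σ : B ≃⋆ₐ[ℂ] B)

private lemma saz_coe (k : ℤ) : starAutZPow σ k = ⇑(σ.toRingEquiv ^ k) := by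
  have h := MonoidHom.map_zpow
    (MonoidHom.mk' (fun f : B ≃+* B => f.toEquiv) (fun a b => rfl)) σ.toRingEquiv k
  exact congrArg (fun e : Equiv.Perm B => ⇑e) h.symm

private lemma saz_add (a b : ℤ) (x : B) :
    starAutZPow σ (a + b) x = starAutZPow σ a (starAutZPow σ b x) := by
  simp only [saz_coe, zpow_add]
  rfl

private lemma saz_zero (x : B) : starAutZPow σ 0 x = x := by
  simp only [saz_coe, zpow_zero]
  rfl

private lemma saz_one (x : B) : starAutZPow σ 1 x = σ x := by
  simp only [saz_coe, zpow_one]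
  rfl

private lemma saz_injective (k : ℤ) : Function.Injective (starAutZPow σ k) := by
  rw [saz_coe]; exact (σ.toRingEquiv ^ k).injective

private lemma saz_map_mul (k : ℤ) (x y : B) :
    starAutZPow σ k (x * y) = starAutZPow σ k x * starAutZPow σ k y := by
  simp only [saz_coe]; exact map_mul _ _ _

private lemma saz_map_add (k : ℤ) (x y : B) :
    starAutZPow σ k (x + y) = starAutZPow σ k x + starAutZPow σ k y := by
  simp only [saz_coe]; exact map_add _ _ _

private lemma saz_map_neg (k : ℤ) (x : B) :
    starAutZPow σ k (-x) = -starAutZPow σ k x := by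
  simp only [saz_coe]; exact map_neg _ _

private lemma saz_map_zero (k : ℤ) : starAutZPow σ k 0 = 0 := by
  simp only [saz_coe]; exact map_zero _

private lemma saz_map_sum (k : ℤ) {ι : Type*} (s : Finset ι) (f : ι → B) :
    starAutZPow σ k (∑ i ∈ s, f i) = ∑ i ∈ s, starAutZPow σ k (f i) := by
  simp only [saz_coe]; exact map_sum _ _ _

private lemma saz_inv_left (y : B) : σ (starAutZPow σ (-1) y) = y := by
  have h := (saz_add σ 1 (-1) y).symm
  rw [saz_one] at h
  simpa [saz_zero] using h

private lemma saz_star (k : ℤ) : ∀ x : B,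
    starAutZPow σ k (star x) = star (starAutZPow σ k x) := by
  have hm1 : ∀ y : B, starAutZPow σ (-1) (star y) = star (starAutZPow σ (-1) y) := by
    intro y
    apply EquivLike.injective σ
    rw [saz_inv_left, map_star, saz_inv_left]
  induction k using Int.induction_on with
  | zero => intro x; simp [saz_zero]
  | succ n ih =>
      have hstep : ∀ y : B, starAutZPow σ ((n : ℤ) + 1) y
          = starAutZPow σ (n : ℤ) (σ y) := by
        intro y
        rw [saz_add, saz_one]
      intro x
      rw [hstep, hstep, map_star, ih]
  | pred n ih =>
      have hstep : ∀ y : B, starAutZPow σ (-(n : ℤ) - 1) y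
          = starAutZPow σ (-(n : ℤ)) (starAutZPow σ (-1) y) := by
        intro y
        rw [show (-(n : ℤ) - 1) = (-(n : ℤ)) + (-1) by ring, saz_add]
      intro x
      rw [hstep, hstep, hm1, ih]

variable (D : NonUnitalStarSubalgebra ℂ B)

private lemma saz_one_image :
    starAutZPow σ 1 '' (D : Set B) = ⇑σ '' (D : Set B) := by
  have : starAutZPow σ 1 = ⇑σ := funext (saz_one σ)
  rw [this]

private lemma mem_im_star {k : ℤ} {u : B}
    (hu : u ∈ starAutZPow σ k '' (D : Set B)) :
    star u ∈ starAutZPow σ k '' (D : Set B) := by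
  obtain ⟨e, he, rfl⟩ := hu
  exact ⟨star e, star_mem he, saz_star σ k e⟩

private lemma mem_im_neg {k : ℤ} {u : B}
    (hu : u ∈ starAutZPow σ k '' (D : Set B)) :
    -u ∈ starAutZPow σ k '' (D : Set B) := by
  obtain ⟨e, he, rfl⟩ := hu
  exact ⟨-e, neg_mem he, saz_map_neg σ k e⟩

end Helpers

section Key

variable {B : Type*} [NonUnitalNormedRing B] [StarRing B] [CStarRing B]
    [NormedSpace ℂ B] [IsScalarTower ℂ B B] [SMulCommClass ℂ B B] [StarModule ℂ B]
    (σ : B ≃⋆ₐ[ℂ] B) (D : NonUnitalStarSubalgebra ℂ B)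

private lemma mul_mem_im
    (h1 : ∀ d ∈ D, ∀ e ∈ D, ∀ k : ℤ, 1 ≤ k →
        d * starAutZPow σ k e ∈ starAutZPow σ k '' (D : Set B))
    {k : ℤ} (hk : 1 ≤ k) {d u : B} (hd : d ∈ D)
    (hu : u ∈ starAutZPow σ k '' (D : Set B)) :
    d * u ∈ starAutZPow σ k '' (D : Set B) := by
  obtain ⟨e, he, rfl⟩ := hu
  exact h1 d hd e he k hk

private lemma im_mul_mem
    (h1 : ∀ d ∈ D, ∀ e ∈ D, ∀ k : ℤ, 1 ≤ k →
        d * starAutZPow σ k e ∈ starAutZPow σ k '' (D : Set B))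
    {k : ℤ} (hk : 1 ≤ k) {d u : B} (hd : d ∈ D)
    (hu : u ∈ starAutZPow σ k '' (D : Set B)) :
    u * d ∈ starAutZPow σ k '' (D : Set B) := by
  have h := mul_mem_im σ D h1 hk (star_mem hd) (mem_im_star σ D hu)
  have h2 := mem_im_star σ D h
  rwa [star_mul, star_star, star_star] at h2

/-- The key induction: `D ∩ (σ(D) + ⋯ + σᵏ(D)) = 0`. -/
private lemma keyR
    (h1 : ∀ d ∈ D, ∀ e ∈ D, ∀ k : ℤ, 1 ≤ k →
        d * starAutZPow σ k e ∈ starAutZPow σ k '' (D : Set B))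
    (hγ : (D : Set B) ∩ (⇑σ '' (D : Set B)) = {0})
    (hβ : (∀ d ∈ D, ∀ e ∈ D,
            (∀ f ∈ D, (d + σ e) * σ f = 0 ∧ σ f * (d + σ e) = 0) → d + σ e = 0) ∨
          {x : B | ∃ d ∈ D, ∃ e ∈ D, x = d * σ e} = ⇑σ '' (D : Set B)) :
    ∀ k : ℕ, ∀ x : B, x ∈ D → ∀ v : ℕ → B,
      (∀ i, i < k → v i ∈ starAutZPow σ ((i : ℤ) + 1) '' (D : Set B)) →
      x + ∑ i ∈ Finset.range k, v i = 0 → x = 0 := by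
  intro k
  induction k with
  | zero => intro x hx v hv hsum; simpa using hsum
  | succ k IH =>
    intro x hx v hv hsum
    obtain ⟨e₁, he₁, hv0⟩ := hv 0 (Nat.succ_pos k)
    have hv0' : v 0 = σ e₁ := by
      rw [← hv0]
      norm_num [saz_one]
    -- the shifted tail
    set w : ℕ → B := fun i => starAutZPow σ (-1) (v (i + 1)) with hw
    have hwmem : ∀ i, i < k → w i ∈ starAutZPow σ ((i : ℤ) + 1) '' (D : Set B) := by
      intro i hi
      obtain ⟨a, ha, hva⟩ := hv (i + 1) (by omega)
      refine ⟨a, ha, ?_⟩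
      have he : ((i : ℤ) + 1) = (-1) + ((((i : ℕ) + 1 : ℕ) : ℤ) + 1) := by push_cast; ring
      rw [he, saz_add, hva]
    set t := ∑ i ∈ Finset.range k, w i with ht
    have hst : σ t = ∑ i ∈ Finset.range k, v (i + 1) := by
      rw [ht, map_sum]
      exact Finset.sum_congr rfl fun i _ => saz_inv_left σ _
    rw [Finset.sum_range_succ', ← hst] at hsum
    -- hsum : x + (σ t + v 0) = 0
    have hσt : σ t = -x - v 0 := by
      calc σ t = x + (σ t + v 0) - x - v 0 := by abel
        _ = 0 - x - v 0 := by rw [hsum]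
        _ = -x - v 0 := by abel
    -- Claim B : t * f = 0 for all f ∈ D
    have hB : ∀ f, f ∈ D → t * f = 0 := by
      intro f hf
      have hx1 : x * σ f ∈ ⇑σ '' (D : Set B) := by
        have := h1 x hx f hf 1 le_rfl
        rwa [saz_one, saz_one_image] at this
      obtain ⟨a, ha, hae⟩ := hx1
      have hkey : σ (t * f) = σ (-a - e₁ * f) := by
        rw [map_mul, hσt, hv0']
        rw [map_sub, map_neg, map_mul]
        rw [hae]
        noncomm_ring
      have htfD : t * f = -a - e₁ * f := EquivLike.injective σ hkey
      have htfmem : t * f ∈ D := by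
        rw [htfD]
        exact sub_mem (neg_mem ha) (mul_mem he₁ hf)
      have : t * f + ∑ i ∈ Finset.range k, -(w i * f) = 0 := by
        have hs : ∑ i ∈ Finset.range k, -(w i * f) = -(t * f) := by
          rw [ht, Finset.sum_neg_distrib, Finset.sum_mul]
        rw [hs]; abel
      exact IH (t * f) htfmem (fun i => -(w i * f))
        (fun i hi => mem_im_neg σ D
          (im_mul_mem σ D h1 (by omega) hf (hwmem i hi))) this
    -- Claim A : f * t = 0 for all f ∈ D
    have hA : ∀ f, f ∈ D → f * t = 0 := by
      intro f hf
      have hx1 : σ f * x ∈ ⇑σ '' (D : Set B) := by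
        have h := h1 (star x) (star_mem hx) (star f) (star_mem hf) 1 le_rfl
        rw [saz_one, saz_one_image] at h
        obtain ⟨b, hb, hbe⟩ := h
        refine ⟨star b, star_mem hb, ?_⟩
        have := congrArg star hbe
        rw [star_mul, ← map_star, star_star, map_star] at this
        rw [map_star]
        rw [this, ← map_star, star_star]
      obtain ⟨a, ha, hae⟩ := hx1
      have hkey : σ (f * t) = σ (-a - f * e₁) := by
        rw [map_mul, hσt, hv0']
        rw [map_sub, map_neg, map_mul]
        rw [hae]
        noncomm_ring
      have htfD : f * t = -a - f * e₁ := EquivLike.injective σ hkey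
      have htfmem : f * t ∈ D := by
        rw [htfD]
        exact sub_mem (neg_mem ha) (mul_mem hf he₁)
      have : f * t + ∑ i ∈ Finset.range k, -(f * w i) = 0 := by
        have hs : ∑ i ∈ Finset.range k, -(f * w i) = -(f * t) := by
          rw [ht, Finset.sum_neg_distrib, Finset.mul_sum]
        rw [hs]; abel
      exact IH (f * t) htfmem (fun i => -(f * w i))
        (fun i hi => mem_im_neg σ D
          (mul_mem_im σ D h1 (by omega) hf (hwmem i hi))) this
    -- common ending
    have hfin : x + σ e₁ = 0 → x = 0 := by
      intro h0
      have hxim : x ∈ (D : Set B) ∩ (⇑σ '' (D : Set B)) := by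
        refine ⟨hx, ⟨-e₁, neg_mem he₁, ?_⟩⟩
        rw [map_neg]
        exact neg_eq_of_add_eq_zero_left h0
      rw [hγ] at hxim
      exact hxim
    rcases hβ with hbl | hp
    · -- condition (β)
      apply hfin
      apply hbl x hx e₁ he₁
      intro f hf
      have hz : x + σ e₁ = -σ t := by
        rw [hv0'] at hsum
        calc x + σ e₁ = x + (σ t + σ e₁) - σ t := by abel
          _ = 0 - σ t := by rw [hsum]
          _ = -σ t := by abel
      constructor
      · rw [hz, neg_mul, ← map_mul, hB f hf, map_zero, neg_zero]
      · rw [hz, mul_neg, ← map_mul, hA f hf, map_zero, neg_zero]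
    · -- products case
      have hfact : ∀ i : ℕ, ∀ u ∈ starAutZPow σ ((i : ℤ) + 1) '' (D : Set B),
          ∃ a ∈ D, ∃ u' ∈ starAutZPow σ ((i : ℤ) + 1) '' (D : Set B), u = a * u' := by
        intro i
        induction i with
        | zero =>
          intro u hu
          rw [show (((0 : ℕ) : ℤ) + 1) = 1 by norm_num, saz_one_image, ← hp] at hu
          obtain ⟨a, ha, e, he, rfl⟩ := hu
          refine ⟨a, ha, σ e, ?_, rfl⟩
          rw [show (((0 : ℕ) : ℤ) + 1) = 1 by norm_num, saz_one_image]
          exact ⟨e, he, rfl⟩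
        | succ i ihf =>
          intro u hu
          obtain ⟨dd, hdd, hddu⟩ := hu
          have h2 : u = σ (starAutZPow σ ((i : ℤ) + 1) dd) := by
            rw [← hddu]
            have he : ((((i : ℕ) + 1 : ℕ) : ℤ) + 1) = 1 + ((i : ℤ) + 1) := by
              push_cast; ring
            rw [he, saz_add, saz_one]
          obtain ⟨a, ha, u', hu', hfac⟩ :=
            ihf (starAutZPow σ ((i : ℤ) + 1) dd) ⟨dd, hdd, rfl⟩
          have hσa : σ a ∈ {x : B | ∃ d ∈ D, ∃ e ∈ D, x = d * σ e} := by
            rw [hp]; exact ⟨a, ha, rfl⟩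
          obtain ⟨a₀, ha₀, b₀, hb₀, hab⟩ := hσa
          have hbu' : b₀ * u' ∈ starAutZPow σ ((i : ℤ) + 1) '' (D : Set B) :=
            mul_mem_im σ D h1 (by omega) hb₀ hu'
          obtain ⟨cc, hcc, hcceq⟩ := hbu'
          refine ⟨a₀, ha₀, σ (b₀ * u'), ?_, ?_⟩
          · refine ⟨cc, hcc, ?_⟩
            have he : ((((i : ℕ) + 1 : ℕ) : ℤ) + 1) = 1 + ((i : ℤ) + 1) := by
              push_cast; ring
            rw [he, saz_add, saz_one, hcceq]
          · rw [h2, hfac, map_mul, hab, mul_assoc, map_mul]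
      have htt : t * star t = 0 := by
        have hstar : star t = ∑ i ∈ Finset.range k, star (w i) := by
          rw [ht, star_sum]
        rw [hstar, Finset.mul_sum]
        refine Finset.sum_eq_zero fun i hi => ?_
        obtain ⟨a, ha, u', hu', hfac⟩ :=
          hfact i (star (w i)) (mem_im_star σ D (hwmem i (Finset.mem_range.mp hi)))
        rw [hfac, ← mul_assoc, hB a ha, zero_mul]
      have htz : t = 0 := by
        have hn : ‖t * star t‖ = ‖t‖ * ‖t‖ := CStarRing.norm_self_mul_star
        rw [htt, norm_zero] at hn
        exact norm_eq_zero.mp (mul_self_eq_zero.mp hn.symm)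
      apply hfin
      have hσ0 : σ t = 0 := by rw [htz, map_zero]
      rw [hv0', hσ0] at hsum
      simpa using hsum

/-- Directness for `ℕ`-indexed families starting at exponent `0`. -/
private lemma keyT
    (h1 : ∀ d ∈ D, ∀ e ∈ D, ∀ k : ℤ, 1 ≤ k →
        d * starAutZPow σ k e ∈ starAutZPow σ k '' (D : Set B))
    (hγ : (D : Set B) ∩ (⇑σ '' (D : Set B)) = {0})
    (hβ : (∀ d ∈ D, ∀ e ∈ D,
            (∀ f ∈ D, (d + σ e) * σ f = 0 ∧ σ f * (d + σ e) = 0) → d + σ e = 0) ∨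
          {x : B | ∃ d ∈ D, ∃ e ∈ D, x = d * σ e} = ⇑σ '' (D : Set B)) :
    ∀ k : ℕ, ∀ v : ℕ → B,
      (∀ i, i < k → v i ∈ starAutZPow σ (i : ℤ) '' (D : Set B)) →
      (∑ i ∈ Finset.range k, v i) = 0 → ∀ i, i < k → v i = 0 := by
  intro k
  induction k with
  | zero => intro v hv hsum i hi; omega
  | succ k IH =>
    intro v hv hsum
    obtain ⟨e₀, he₀, hv0⟩ := hv 0 (Nat.succ_pos k)
    have hv0D : v 0 ∈ D := by
      rw [← hv0]
      have : starAutZPow σ ((0 : ℕ) : ℤ) e₀ = e₀ := by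
        norm_num [saz_zero]
      rw [this]; exact he₀
    rw [Finset.sum_range_succ'] at hsum
    have hsum' : v 0 + ∑ i ∈ Finset.range k, v (i + 1) = 0 := by
      rw [add_comm] at hsum
      exact hsum
    have hv0z : v 0 = 0 := by
      refine keyR σ D h1 hγ hβ k (v 0) hv0D (fun i => v (i + 1)) ?_ hsum'
      intro i hi
      have h := hv (i + 1) (by omega)
      have he : (((i : ℕ) + 1 : ℕ) : ℤ) = (i : ℤ) + 1 := by push_cast; ring
      rwa [he] at h
    have htail : ∑ i ∈ Finset.range k, v (i + 1) = 0 := by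
      rw [hv0z] at hsum'
      simpa using hsum' 
    -- shift down by σ⁻¹
    set w : ℕ → B := fun i => starAutZPow σ (-1) (v (i + 1)) with hw
    have hwmem : ∀ i, i < k → w i ∈ starAutZPow σ (i : ℤ) '' (D : Set B) := by
      intro i hi
      obtain ⟨a, ha, hva⟩ := hv (i + 1) (by omega)
      refine ⟨a, ha, ?_⟩
      have he : (i : ℤ) = (-1) + (((i : ℕ) + 1 : ℕ) : ℤ) := by push_cast; ring
      rw [he, saz_add, hva]
    have hwsum : ∑ i ∈ Finset.range k, w i = 0 := by
      have : ∑ i ∈ Finset.range k, w i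
          = starAutZPow σ (-1) (∑ i ∈ Finset.range k, v (i + 1)) := by
        rw [saz_map_sum]
      rw [this, htail, saz_map_zero]
    have hwz := IH w hwmem hwsum
    intro i hi
    match i with
    | 0 => exact hv0z
    | (i + 1) =>
      have h0 : w i = 0 := hwz i (by omega)
      have : v (i + 1) = σ (w i) := (saz_inv_left σ (v (i + 1))).symm
      rw [this, h0, map_zero]

end Key

/-- Under the hypotheses: `d·σᵏ(e) ∈ σᵏ(D)` for `k ≥ 1`, `D ∩ σ(D) = {0}`, and either (β)
(`σ(D)` has trivial two-sided annihilator in `D + σ(D)`) or `D·σ(D) = σ(D)`, the sum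
decomposition `D_{m,n} = σ^{m-1}(D) ⊕ ⋯ ⊕ σ^{n-1}(D)` is direct: if elements
`d_j ∈ σ^{j-1}(D)` (`m ≤ j ≤ n`) sum to `0`, then each `d_j = 0`. -/
theorem stmt15 {B : Type*} [NonUnitalNormedRing B] [StarRing B] [CStarRing B]
    [NormedSpace ℂ B] [IsScalarTower ℂ B B] [SMulCommClass ℂ B B] [StarModule ℂ B]
    [CompleteSpace B]
    (σ : B ≃⋆ₐ[ℂ] B) (D : NonUnitalStarSubalgebra ℂ B) (hD : IsClosed (D : Set B))
    (h1 : ∀ d ∈ D, ∀ e ∈ D, ∀ k : ℤ, 1 ≤ k →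
        d * starAutZPow σ k e ∈ starAutZPow σ k '' (D : Set B))
    (hγ : (D : Set B) ∩ (⇑σ '' (D : Set B)) = {0})
    (hβ : (∀ d ∈ D, ∀ e ∈ D,
            (∀ f ∈ D, (d + σ e) * σ f = 0 ∧ σ f * (d + σ e) = 0) → d + σ e = 0) ∨
          {x : B | ∃ d ∈ D, ∃ e ∈ D, x = d * σ e} = ⇑σ '' (D : Set B)) :
    ∀ m n : ℤ, m ≤ n → ∀ d : ℤ → B,
      (∀ j ∈ Finset.Icc m n, d j ∈ starAutZPow σ (j - 1) '' (D : Set B)) →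
      (∑ j ∈ Finset.Icc m n, d j) = 0 →
      ∀ j ∈ Finset.Icc m n, d j = 0 := by
  intro m n hmn d hd hsum j hj
  set k : ℕ := (n + 1 - m).toNat with hk
  set v : ℕ → B := fun i => starAutZPow σ (1 - m) (d (m + (i : ℤ))) with hv
  have hmem : ∀ i, i < k → v i ∈ starAutZPow σ (i : ℤ) '' (D : Set B) := by
    intro i hi
    have hij : m + (i : ℤ) ∈ Finset.Icc m n := by
      rw [Finset.mem_Icc]; omega
    obtain ⟨a, ha, haeq⟩ := hd (m + (i : ℤ)) hij
    refine ⟨a, ha, ?_⟩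
    have he : (i : ℤ) = (1 - m) + ((m + (i : ℤ)) - 1) := by ring
    rw [he, saz_add, haeq]
  have hre : ∑ i ∈ Finset.range k, d (m + (i : ℤ)) = ∑ j ∈ Finset.Icc m n, d j := by
    apply Finset.sum_nbij' (i := fun i : ℕ => m + (i : ℤ)) (j := fun j : ℤ => (j - m).toNat)
    · intro a ha
      rw [Finset.mem_range] at ha
      rw [Finset.mem_Icc]
      omega
    · intro a ha
      rw [Finset.mem_Icc] at ha
      rw [Finset.mem_range]
      omega
    · intro a ha; omega
    · intro a ha
      rw [Finset.mem_Icc] at ha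
      omega
    · intro a ha; rfl
  have hsum0 : ∑ i ∈ Finset.range k, v i = 0 := by
    rw [hv]
    rw [← saz_map_sum, hre, hsum, saz_map_zero]
  have hall := keyT σ D h1 hγ hβ k v hmem hsum0
  rw [Finset.mem_Icc] at hj
  have hjk : (j - m).toNat < k := by omega
  have h0 := hall ((j - m).toNat) hjk
  have hji : m + (((j - m).toNat : ℕ) : ℤ) = j := by omega
  rw [hv] at h0
  simp only [hji] at h0
  -- h0 : starAutZPow σ (1 - m) (d j) = 0
  have := saz_injective σ (1 - m) (a₁ := d j) (a₂ := 0)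
  apply this
  rw [h0, saz_map_zero]
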